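/- For any n ≥ m ≥ 0 with L(n−m)∘ϑ^m > 0 (i.e., n−m is not a weak ascending ladder epoch of the walk reversed at n), the most recent common ancestor satisfies mrca(m,n) = n − T(T^{−1}(n−m))∘ϑ^n = m − τ_{L(n−m)}∘ϑ^m, where T^{−1}(j) = min{k ≥ 0 : T(k) ≥ j} and τ_ℓ = inf{k > 0 : S(k) ≥ ℓ}. -/

import Mathlib

open scoped Classical NNReal
noncomputable section

/-- Finite point measures on `(0,∞)`, modeled as multisets of atoms in `ℝ≥0`. -/
abbrev PtM := Multiset ℝ≥0

/-- A stick: a life-length together with a finite point measure of birth times. -/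
abbrev Stick := ℝ≥0 × PtM

/-- The space of doubly infinite sequences of sticks. -/
abbrev Om := ℤ → Stick

/-- The shift operator `θ_n`. -/
def theta (n : ℤ) (ω : Om) : Om := fun k => ω (n + k)

/-- The dual (time-reversal) operator `ϑ^n`. -/
def dual (n : ℤ) (ω : Om) : Om := fun k => ω (n - k - 1)

/-- Life length of the `k`-th individual. -/
def Vc (ω : Om) (k : ℤ) : ℝ≥0 := (ω k).1

/-- Point measure (ages at childbearing) of the `k`-th individual. -/
def Pc (ω : Om) (k : ℤ) : PtM := (ω k).2

/-- The Lukasiewicz path `S`. -/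
def Sw (ω : Om) (n : ℤ) : ℤ :=
  if 0 ≤ n then ∑ k ∈ Finset.range n.toNat, ((Multiset.card (Pc ω (k : ℤ)) : ℤ) - 1)
  else - ∑ k ∈ Finset.range (-n).toNat, ((Multiset.card (Pc ω (-(k : ℤ) - 1)) : ℤ) - 1)

/-- `π(ν)`: the supremum of the support (largest atom) of a finite point measure. -/
def piM (ν : PtM) : ℝ≥0 := ν.sup

/-- `Υ_j(ν)`: removes the `j` largest atoms of `ν`. -/
def upsilon (j : ℕ) (ν : PtM) : PtM :=
  ((ν.sort (· ≤ ·)).take (Multiset.card ν - j) : List ℝ≥0)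

/-- The map `Φ` driving the spine process dynamics. -/
def phiSp (Y : List PtM) (ν : PtM) : List PtM :=
  if ν = 0 then
    match Y.reverse.dropWhile (fun m => decide (Multiset.card m < 2)) with
    | [] => []
    | h :: t => (upsilon 1 h :: t).reverse
  else Y ++ [ν]

/-- The spine process `𝕊₀ⁿ`. -/
def spine (ω : Om) : ℕ → List PtM
  | 0 => []
  | n + 1 => phiSp (spine ω n) (Pc ω (n : ℤ))

/-- `π` extended to finite sequences of point measures. -/
def piL (Y : List PtM) : ℝ≥0 := (Y.map piM).sum

/-- The chronological height process `ℍ(n) = π(𝕊₀ⁿ)`. -/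
def Hchr (ω : Om) (n : ℕ) : ℝ≥0 := piL (spine ω n)

/-- The genealogical height process
`𝓗(n) = #{k ∈ {0,…,n−1} : S(k+1) ≤ min_{k+1 ≤ j ≤ n} S(j)}`. -/
def genH (ω : Om) (n : ℕ) : ℕ :=
  ((Finset.range n).filter
    (fun k : ℕ => ∀ j : ℕ, j ∈ Finset.Icc (k + 1) n → Sw ω ((k : ℤ) + 1) ≤ Sw ω (j : ℤ))).card

/-- Weak ascending ladder height times `T(k)` (valued `⊤` if nonexistent). -/
def ladderT (ω : Om) : ℕ → ℕ∞
  | 0 => 0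
  | k + 1 => sInf {x : ℕ∞ | ∃ m j : ℕ, x = (m : ℕ∞) ∧ ladderT ω k = (j : ℕ∞) ∧
      j < m ∧ Sw ω (j : ℤ) ≤ Sw ω (m : ℤ)}

/-- `T^{-1}(n) = min{k ≥ 0 : T(k) ≥ n}`. -/
def Tinv (ω : Om) (n : ℕ) : ℕ := sInf {k : ℕ | (n : ℕ∞) ≤ ladderT ω k}

/-- `T̃^{-1}(n) = max{k ≥ 0 : T(k) ≤ n}`. -/
def tildeTinv (ω : Om) (n : ℕ) : ℕ := sSup {k : ℕ | ladderT ω k ≤ (n : ℕ∞)}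

/-- First passage time upward `τ_ℓ = inf{k > 0 : S(k) ≥ ℓ}`. -/
def tauUp (ω : Om) (ℓ : ℤ) : ℕ∞ :=
  sInf {x : ℕ∞ | ∃ k : ℕ, x = (k : ℕ∞) ∧ 0 < k ∧ ℓ ≤ Sw ω (k : ℤ)}

/-- First hitting time downward `τ⁻_ℓ = inf{k ≥ 0 : S(k) = −ℓ}`. -/
def tauDown (ω : Om) (ℓ : ℤ) : ℕ∞ :=
  sInf {x : ℕ∞ | ∃ k : ℕ, x = (k : ℕ∞) ∧ Sw ω (k : ℤ) = -ℓ}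

/-- `τ_ℓ` as a natural number (junk value `0` when infinite). -/
def tauUpN (ω : Om) (ℓ : ℤ) : ℕ := (tauUp ω ℓ).toNat

/-- The undershoot `ζ_ℓ = ℓ − S(τ_ℓ − 1)`. -/
def zetaU (ω : Om) (ℓ : ℤ) : ℤ := ℓ - Sw ω ((tauUpN ω ℓ : ℤ) - 1)

/-- `μ_ℓ = Υ_{ζ_ℓ}(𝒫_{τ_ℓ − 1})`. -/
def muU (ω : Om) (ℓ : ℤ) : PtM := upsilon (zetaU ω ℓ).toNat (Pc ω ((tauUpN ω ℓ : ℤ) - 1))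

/-- `𝒬(k) = μ₀ ∘ θ_{T(k−1)}`. -/
def Qcal (ω : Om) (k : ℕ) : PtM := muU (theta ((ladderT ω (k - 1)).toNat : ℤ) ω) 0

/-- `𝕐(k) = π(𝒬(k))`. -/
def Ybb (ω : Om) (k : ℕ) : ℝ≥0 := piM (Qcal ω k)

/-- The backward maximum `L(m) = max_{0 ≤ k ≤ m} S(−k)`. -/
def Lmax (ω : Om) (m : ℕ) : ℤ :=
  Finset.sup' (Finset.range (m + 1)) Finset.nonempty_range_add_one (fun k => Sw ω (-(k : ℤ)))

/-- The ancestor set `𝒜(n) = {n − T(k)∘ϑ^n : k ≥ 0}` (only finite ladder times). -/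
def Aset (ω : Om) (n : ℕ) : Set ℤ :=
  {a | ∃ k j : ℕ, ladderT (dual (n : ℤ) ω) k = (j : ℕ∞) ∧ a = (n : ℤ) - (j : ℤ)}

/-- `mrca(m,n) = max(𝒜(m) ∩ 𝒜(n))`. -/
def mrcaZ (ω : Om) (m n : ℕ) : ℤ := sSup (Aset ω m ∩ Aset ω n)

/-- `χ(m,k) = inf{j ≥ m+1 : S(j) = S(m+1) − k}`. -/
def chiT (ω : Om) (m k : ℕ) : ℕ∞ :=
  sInf {x : ℕ∞ | ∃ j : ℕ, x = (j : ℕ∞) ∧ m + 1 ≤ j ∧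
    Sw ω (j : ℤ) = Sw ω ((m : ℤ) + 1) - (k : ℤ)}

/-- `χ(m) = inf{j ≥ m+1 : S(j) = S(m) − 1}`. -/
def chiF (ω : Om) (m : ℕ) : ℕ∞ :=
  sInf {x : ℕ∞ | ∃ j : ℕ, x = (j : ℕ∞) ∧ m + 1 ≤ j ∧ Sw ω (j : ℤ) = Sw ω (m : ℤ) - 1}

/-- The functional `D_ℓ(𝕊₀^m)` of the spine, expressed through the dual walk:
`D_ℓ = (Σ_{i : 0 < T(i) ≤ min(τ_ℓ, m)} 𝕐(i) − 1_{τ_ℓ ≤ m} π(μ_ℓ)) ∘ ϑ^m`, with `D_0 ≡ 0`. -/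
def Dfun (ω : Om) (m : ℕ) (ℓ : ℤ) : ℝ :=
  if ℓ < 1 then 0 else
    (∑ i ∈ (Finset.Icc 1 m).filter
        (fun i => 0 < ladderT (dual (m : ℤ) ω) i ∧
          ladderT (dual (m : ℤ) ω) i ≤ min (tauUp (dual (m : ℤ) ω) ℓ) (m : ℕ∞)),
      (Ybb (dual (m : ℤ) ω) i : ℝ))
    - (if tauUp (dual (m : ℤ) ω) ℓ ≤ (m : ℕ∞) then (piM (muU (dual (m : ℤ) ω) ℓ) : ℝ) else 0)

/-- `K_j = 2𝒱(j−1) − ℍ(j)`. -/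
def Kt (ω : Om) (j : ℕ) : ℝ := 2 * ∑ k ∈ Finset.range j, (Vc ω (k : ℤ) : ℝ) - (Hchr ω j : ℝ)

/-- The chronological contour process: on `[K_n, K_{n+1}]` it increases at rate `+1` from
`ℍ(n)` up to `ℍ(n) + V_n` and then decreases at rate `−1` down to `ℍ(n+1)`. -/
def contour (ω : Om) (t : ℝ) : ℝ :=
  let n := sSup {j : ℕ | Kt ω j ≤ t}
  min ((Hchr ω n : ℝ) + (t - Kt ω n)) ((Hchr ω (n + 1) : ℝ) + (Kt ω (n + 1) - t))


lemma Sw_nat (ω : Om) (q : ℕ) :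
    Sw ω (q:ℤ) = ∑ k ∈ Finset.range q, ((Multiset.card (Pc ω (k : ℤ)) : ℤ) - 1) := by
  rw [Sw, if_pos (by positivity)]
  simp

lemma Sw_negnat (ω : Om) (q : ℕ) :
    Sw ω (-(q:ℤ)) = - ∑ k ∈ Finset.range q, ((Multiset.card (Pc ω (-(k:ℤ) - 1)) : ℤ) - 1) := by
  rcases Nat.eq_zero_or_pos q with rfl | hq
  · simp [Sw]
  · rw [Sw, if_neg (by omega)]
    simp

lemma Sw_step (ω : Om) (p : ℤ) :
    Sw ω (p + 1) = Sw ω p + ((Multiset.card (Pc ω p) : ℤ) - 1) := by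
  rcases le_or_gt 0 p with hp | hp
  · obtain ⟨q, rfl⟩ := Int.eq_ofNat_of_zero_le hp
    have h1 : ((q:ℤ) + 1) = ((q+1 : ℕ) : ℤ) := by push_cast; ring
    rw [h1, Sw_nat, Sw_nat, Finset.sum_range_succ]
  · obtain ⟨q, hqq⟩ : ∃ q : ℕ, p = -((q:ℤ)) - 1 := ⟨(-p-1).toNat, by omega⟩
    subst hqq
    have h1 : (-(q:ℤ) - 1 + 1) = -((q:ℕ):ℤ) := by ring
    have e1 : Sw ω (-(q:ℤ) - 1)
        = -∑ k ∈ Finset.range (q+1), ((Multiset.card (Pc ω (-(k:ℤ) - 1)) : ℤ) - 1) := by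
      rw [show (-(q:ℤ) - 1) = -(((q+1:ℕ)):ℤ) by push_cast; ring]
      exact Sw_negnat ω (q+1)
    rw [h1, Sw_negnat ω q, e1, Finset.sum_range_succ]
    ring

lemma Sw_dual (ω : Om) (N z : ℤ) : Sw (dual N ω) z = Sw ω N - Sw ω (N - z) := by
  induction z using Int.induction_on with
  | zero => simp [show Sw (dual N ω) 0 = 0 from Sw_nat _ 0 ▸ by simp [Sw_nat]]
  | succ i ih =>
      have hs := Sw_step (dual N ω) i
      have hs2 := Sw_step ω (N - (i+1))
      have hP : Pc (dual N ω) i = Pc ω (N - (i:ℤ) - 1) := rfl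
      have : N - (i+1) + 1 = N - i := by ring
      rw [this] at hs2
      rw [hs, hP, ih, hs2]
      have : N - (i:ℤ) - 1 = N - ((i:ℤ)+1) := by ring
      rw [this]
      ring
  | pred i ih =>
      have hs := Sw_step (dual N ω) (-(i:ℤ) - 1)
      have hs2 := Sw_step ω (N + i)
      have hP : Pc (dual N ω) (-(i:ℤ)-1) = Pc ω (N + i) := by
        show Pc ω (N - (-(i:ℤ)-1) - 1) = Pc ω (N + i); ring_nf
      have h1 : -(i:ℤ) - 1 + 1 = -(i:ℤ) := by ring
      rw [h1] at hs
      rw [hP] at hs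
      have h2 : N - (-(i:ℤ)) = N + i := by ring
      have h3 : N - (-(i:ℤ) - 1) = N + i + 1 := by ring
      rw [h2] at ih
      rw [h3]
      omega


lemma natSet_sInf_le {P : ℕ → Prop} {m : ℕ} (h : P m) :
    sInf {x : ℕ∞ | ∃ k : ℕ, x = (k:ℕ∞) ∧ P k} ≤ (m:ℕ∞) :=
  sInf_le ⟨m, rfl, h⟩

lemma natSet_sInf_eq {P : ℕ → Prop} {b : ℕ}
    (h : sInf {x : ℕ∞ | ∃ k : ℕ, x = (k:ℕ∞) ∧ P k} = (b:ℕ∞)) :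
    P b ∧ ∀ m, P m → b ≤ m := by
  have hne : ∃ m, P m := by
    by_contra hc
    push_neg at hc
    have he : {x : ℕ∞ | ∃ k : ℕ, x = (k:ℕ∞) ∧ P k} = ∅ := by
      ext x
      simp only [Set.mem_setOf_eq, Set.mem_empty_iff_false, iff_false, not_exists]
      rintro k ⟨rfl, hk⟩
      exact hc k hk
    rw [he, sInf_empty] at h
    exact (ENat.coe_ne_top b) h.symm
  have key : sInf {x : ℕ∞ | ∃ k : ℕ, x = (k:ℕ∞) ∧ P k} = ((sInf {m | P m} : ℕ) : ℕ∞) := by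
    apply le_antisymm
    · exact natSet_sInf_le (Nat.sInf_mem hne)
    · apply le_sInf
      rintro x ⟨k, rfl, hk⟩
      exact_mod_cast Nat.sInf_le hk
  rw [key] at h
  have hB : sInf {m | P m} = b := by exact_mod_cast h
  exact ⟨hB ▸ Nat.sInf_mem hne, fun m hm => hB ▸ Nat.sInf_le hm⟩

/-- Weak-record property. -/
def RecP (ω : Om) (j : ℕ) : Prop := ∀ i : ℕ, i ≤ j → Sw ω (i:ℤ) ≤ Sw ω (j:ℤ)

lemma ladder_set_eq (ω : Om) {k j : ℕ} (hk : ladderT ω k = (j:ℕ∞)) :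
    {x : ℕ∞ | ∃ m j' : ℕ, x = (m : ℕ∞) ∧ ladderT ω k = (j' : ℕ∞) ∧
      j' < m ∧ Sw ω (j' : ℤ) ≤ Sw ω (m : ℤ)}
    = {x : ℕ∞ | ∃ m : ℕ, x = (m:ℕ∞) ∧ (j < m ∧ Sw ω (j:ℤ) ≤ Sw ω (m:ℤ))} := by
  ext x
  constructor
  · rintro ⟨m, j', rfl, hj', h1, h2⟩
    rw [hk] at hj'
    have : j = j' := by exact_mod_cast hj'
    subst this
    exact ⟨m, rfl, h1, h2⟩
  · rintro ⟨m, rfl, h1, h2⟩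
    exact ⟨m, j, rfl, hk, h1, h2⟩

lemma rec_succ (ω : Om) {k j b : ℕ} (hk : ladderT ω k = (j:ℕ∞)) (hrec : RecP ω j)
    (hk1 : ladderT ω (k+1) = (b:ℕ∞)) : RecP ω b := by
  rw [show ladderT ω (k+1) = sInf _ from rfl, ladder_set_eq ω hk] at hk1
  obtain ⟨⟨hjb, hSb⟩, hmin⟩ := natSet_sInf_eq hk1
  intro i hi
  rcases le_or_gt i j with hij | hij
  · exact le_trans (hrec i hij) hSb
  · rcases eq_or_lt_of_le hi with rfl | hib
    · exact le_rfl
    · have h2 : ¬ (Sw ω (j:ℤ) ≤ Sw ω (i:ℤ)) := fun h => absurd (hmin i ⟨hij, h⟩) (by omega)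
      push_neg at h2
      exact le_trans h2.le hSb

lemma rec_of_ladder (ω : Om) : ∀ k, ∀ j : ℕ, ladderT ω k = (j:ℕ∞) → RecP ω j := by
  intro k
  induction k with
  | zero =>
      intro j hj
      have : j = 0 := by
        have : (0:ℕ∞) = (j:ℕ∞) := hj
        exact_mod_cast this.symm
      subst this
      intro i hi
      have : i = 0 := Nat.le_zero.mp hi
      subst this
      exact le_rfl
  | succ k ih =>
      intro b hb
      have hset : ladderT ω (k+1) = sInf {x : ℕ∞ | ∃ m j' : ℕ, x = (m : ℕ∞) ∧ ladderT ω k = (j' : ℕ∞) ∧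
          j' < m ∧ Sw ω (j' : ℤ) ≤ Sw ω (m : ℤ)} := rfl
      -- need ladderT ω k finite
      have hfin : ∃ j : ℕ, ladderT ω k = (j:ℕ∞) := by
        by_contra hc
        push_neg at hc
        have he : {x : ℕ∞ | ∃ m j' : ℕ, x = (m : ℕ∞) ∧ ladderT ω k = (j' : ℕ∞) ∧
            j' < m ∧ Sw ω (j' : ℤ) ≤ Sw ω (m : ℤ)} = ∅ := by
          ext x
          simp only [Set.mem_setOf_eq, Set.mem_empty_iff_false, iff_false, not_exists]
          rintro m j' ⟨rfl, hj', _⟩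
          exact hc j' hj'
        rw [hset, he, sInf_empty] at hb
        exact (ENat.coe_ne_top b) hb.symm
      obtain ⟨j, hj⟩ := hfin
      exact rec_succ ω hj (ih j hj) hb

lemma ladder_add_one_le (ω : Om) (k : ℕ) : ladderT ω k + 1 ≤ ladderT ω (k+1) := by
  show ladderT ω k + 1 ≤ sInf _
  apply le_sInf
  rintro x ⟨m, j', rfl, hj', h1, _⟩
  rw [hj']
  exact_mod_cast Nat.succ_le_of_lt h1

lemma ladder_mono (ω : Om) : Monotone (ladderT ω) := by
  apply monotone_nat_of_le_succ
  intro k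
  exact le_trans (le_add_right le_rfl) (ladder_add_one_le ω k)

lemma le_ladder_self (ω : Om) (k : ℕ) : (k:ℕ∞) ≤ ladderT ω k := by
  induction k with
  | zero => simp
  | succ k ih =>
      calc ((k+1 : ℕ):ℕ∞) = (k:ℕ∞) + 1 := by push_cast; rfl
        _ ≤ ladderT ω k + 1 := add_le_add ih le_rfl
        _ ≤ ladderT ω (k+1) := ladder_add_one_le ω k

lemma ladder_of_rec (ω : Om) : ∀ j : ℕ, RecP ω j → ∃ k, ladderT ω k = (j:ℕ∞) := by
  intro j
  induction j using Nat.strong_induction_on with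
  | _ j IH =>
    intro hrec
    rcases Nat.eq_zero_or_pos j with rfl | hj
    · exact ⟨0, rfl⟩
    · set j' := Nat.findGreatest (RecP ω) (j-1) with hj'def
      have hrec0 : RecP ω 0 := by
        intro i hi
        have : i = 0 := Nat.le_zero.mp hi
        subst this; exact le_rfl
      have hrecj' : RecP ω j' := Nat.findGreatest_spec (Nat.zero_le _) hrec0
      have hj'le : j' ≤ j - 1 := Nat.findGreatest_le _
      have hj'lt : j' < j := by omega
      obtain ⟨k, hk⟩ := IH j' hj'lt hrecj'
      refine ⟨k+1, ?_⟩
      have hset : ladderT ω (k+1) = sInf {x : ℕ∞ | ∃ m : ℕ, x = (m:ℕ∞) ∧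
          (j' < m ∧ Sw ω (j':ℤ) ≤ Sw ω (m:ℤ))} := by
        rw [show ladderT ω (k+1) = sInf _ from rfl, ladder_set_eq ω hk]
      have hjin : (j:ℕ∞) ∈ {x : ℕ∞ | ∃ m : ℕ, x = (m:ℕ∞) ∧
          (j' < m ∧ Sw ω (j':ℤ) ≤ Sw ω (m:ℤ))} := ⟨j, rfl, hj'lt, hrec j' hj'lt.le⟩
      have hle : ladderT ω (k+1) ≤ (j:ℕ∞) := hset ▸ sInf_le hjin
      -- ladderT ω (k+1) is finite
      obtain ⟨b, hb⟩ : ∃ b : ℕ, ladderT ω (k+1) = (b:ℕ∞) := by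
        rcases eq_or_ne (ladderT ω (k+1)) ⊤ with h | h
        · rw [h] at hle; exact absurd (top_le_iff.mp hle) (ENat.coe_ne_top j)
        · exact ⟨(ladderT ω (k+1)).toNat, (ENat.coe_toNat h).symm⟩
      have hbj : b ≤ j := by exact_mod_cast hb ▸ hle
      have hrecb : RecP ω b := rec_succ ω hk hrecj' hb
      have hbj' : j' < b := by
        have := natSet_sInf_eq (hset ▸ hb :
          sInf {x : ℕ∞ | ∃ m : ℕ, x = (m:ℕ∞) ∧ (j' < m ∧ Sw ω (j':ℤ) ≤ Sw ω (m:ℤ))} = (b:ℕ∞))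
        exact this.1.1
      have : b = j := by
        by_contra hne
        have hblt : b < j := lt_of_le_of_ne hbj hne
        exact absurd hrecb (Nat.findGreatest_is_greatest hbj' (by omega))
      rw [hb, this]






lemma mem_Aset_iff (ω : Om) (N : ℕ) (a : ℤ) :
    a ∈ Aset ω N ↔ a ≤ (N:ℤ) ∧ ∀ p : ℤ, a ≤ p → p ≤ (N:ℤ) → Sw ω a ≤ Sw ω p := by
  constructor
  · rintro ⟨k, j, hk, rfl⟩
    have hrec : RecP (dual (N:ℤ) ω) j := rec_of_ladder _ k j hk
    refine ⟨by omega, fun p hap hpN => ?_⟩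
    have hi : ((N:ℤ) - p).toNat ≤ j := by omega
    have := hrec ((N:ℤ) - p).toNat hi
    rw [Sw_dual, Sw_dual] at this
    have e1 : (N:ℤ) - ((((N:ℤ) - p).toNat : ℕ) : ℤ) = p := by omega
    have e2 : (N:ℤ) - (j:ℤ) = (N:ℤ) - (j:ℤ) := rfl
    rw [e1] at this
    omega
  · rintro ⟨haN, h⟩
    set j : ℕ := ((N:ℤ) - a).toNat with hjdef
    have haj : a = (N:ℤ) - (j:ℤ) := by omega
    have hrec : RecP (dual (N:ℤ) ω) j := by
      intro i hi
      rw [Sw_dual, Sw_dual]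
      have := h ((N:ℤ) - (i:ℤ)) (by omega) (by omega)
      rw [haj] at this
      omega
    obtain ⟨k, hk⟩ := ladder_of_rec _ j hrec
    exact ⟨k, j, hk, haj⟩

theorem stmt8 (ω : Om) (m n : ℕ) (hmn : m ≤ n)
    (hL : 0 < Lmax (dual (m : ℤ) ω) (n - m)) (a b : ℕ)
    (ha : ladderT (dual (n : ℤ) ω) (Tinv (dual (n : ℤ) ω) (n - m)) = (a : ℕ∞))
    (hb : tauUp (dual (m : ℤ) ω) (Lmax (dual (m : ℤ) ω) (n - m)) = (b : ℕ∞)) :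
    mrcaZ ω m n = (n : ℤ) - (a : ℤ) ∧ mrcaZ ω m n = (m : ℤ) - (b : ℤ) := by
  set L : ℤ := Lmax (dual (m:ℤ) ω) (n - m) with hLdef
  set tgt : ℤ := Sw ω (m:ℤ) - L with htgt
  have hdualm : ∀ z : ℤ, Sw (dual (m:ℤ) ω) z = Sw ω (m:ℤ) - Sw ω ((m:ℤ) - z) :=
    Sw_dual ω (m:ℤ)
  have htgt_min : ∀ p : ℤ, (m:ℤ) ≤ p → p ≤ (n:ℤ) → tgt ≤ Sw ω p := by
    intro p h1 h2
    have hk : (p - (m:ℤ)).toNat ∈ Finset.range (n - m + 1) := by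
      simp only [Finset.mem_range]; omega
    have h3 : Sw (dual (m:ℤ) ω) (-(((p - (m:ℤ)).toNat : ℕ):ℤ)) ≤ L := by
      rw [hLdef]; exact Finset.le_sup' (fun k : ℕ => Sw (dual (m:ℤ) ω) (-(k:ℤ))) hk
    rw [hdualm] at h3
    have e : (m:ℤ) - (-(((p - (m:ℤ)).toNat : ℕ) : ℤ)) = p := by omega
    rw [e] at h3
    omega
  obtain ⟨k₀, hk₀mem, hk₀⟩ := Finset.exists_mem_eq_sup'
      (Finset.nonempty_range_add_one : (Finset.range (n - m + 1)).Nonempty)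
      (fun k : ℕ => Sw (dual (m:ℤ) ω) (-(k:ℤ)))
  have hk₀le : k₀ ≤ n - m := by
    have := Finset.mem_range.mp hk₀mem; omega
  have hLk₀ : L = Sw (dual (m:ℤ) ω) (-(k₀:ℤ)) := by rw [hLdef]; exact hk₀
  have htgt_att : tgt = Sw ω ((m:ℤ) + (k₀:ℤ)) := by
    rw [htgt, hLk₀, hdualm]; ring_nf
  have hb' : sInf {x : ℕ∞ | ∃ k : ℕ, x = (k:ℕ∞) ∧
      (0 < k ∧ L ≤ Sw (dual (m:ℤ) ω) (k:ℤ))} = (b:ℕ∞) := hb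
  obtain ⟨⟨hbpos, hbS⟩, hbmin⟩ := natSet_sInf_eq hb'
  rw [hdualm] at hbS
  -- hbS : L ≤ Sw ω m - Sw ω (m - b), i.e. Sw ω (m - b) ≤ tgt
  have hSmb : Sw ω ((m:ℤ) - (b:ℤ)) ≤ tgt := by omega
  have hmem_n : ((m:ℤ) - (b:ℤ)) ∈ Aset ω n := by
    rw [mem_Aset_iff]
    refine ⟨by omega, fun p h1 h2 => ?_⟩
    rcases le_or_gt (m:ℤ) p with hp | hp
    · exact le_trans hSmb (htgt_min p hp h2)
    · set k : ℕ := ((m:ℤ) - p).toNat with hkdef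
      have hk1 : 0 < k ∧ k ≤ b := by omega
      rcases eq_or_lt_of_le hk1.2 with heq | hlt
      · have : p = (m:ℤ) - (b:ℤ) := by omega
        rw [this]
      · have hnot : ¬ (L ≤ Sw (dual (m:ℤ) ω) (k:ℤ)) :=
          fun h => absurd (hbmin k ⟨hk1.1, h⟩) (by omega)
        rw [hdualm] at hnot
        have ep : (m:ℤ) - (k:ℤ) = p := by omega
        rw [ep] at hnot
        omega
  have hmem_m : ((m:ℤ) - (b:ℤ)) ∈ Aset ω m := by
    rw [mem_Aset_iff]
    exact ⟨by omega, fun p h1 h2 =>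
      ((mem_Aset_iff ω n _).mp hmem_n).2 p h1 (by omega)⟩
  have hub : ∀ x ∈ Aset ω m ∩ Aset ω n, x ≤ (m:ℤ) - (b:ℤ) := by
    rintro x ⟨hxm, hxn⟩
    have h1 := (mem_Aset_iff ω m x).mp hxm
    have h2 := (mem_Aset_iff ω n x).mp hxn
    by_contra hc
    push_neg at hc
    have hxle : x ≤ (m:ℤ) := h1.1
    have hxtgt : Sw ω x ≤ tgt := by
      rw [htgt_att]; exact h2.2 _ (by omega) (by omega)
    rcases eq_or_lt_of_le hxle with rfl | hxlt
    · omega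
    · set k : ℕ := ((m:ℤ) - x).toNat with hkdef
      have hkb : 0 < k ∧ k < b := by omega
      have hnot : ¬ (L ≤ Sw (dual (m:ℤ) ω) (k:ℤ)) :=
        fun h => absurd (hbmin k ⟨hkb.1, h⟩) (by omega)
      rw [hdualm] at hnot
      have ex : (m:ℤ) - (k:ℤ) = x := by omega
      rw [ex] at hnot
      omega
  have hgreat : IsGreatest (Aset ω m ∩ Aset ω n) ((m:ℤ) - (b:ℤ)) :=
    ⟨⟨hmem_m, hmem_n⟩, hub⟩
  have hmrca2 : mrcaZ ω m n = (m:ℤ) - (b:ℤ) := hgreat.csSup_eq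
  -- first equality
  have hTset : (n - m) ∈ {k : ℕ | ((n-m:ℕ) : ℕ∞) ≤ ladderT (dual (n:ℤ) ω) k} :=
    le_ladder_self _ _
  have hTmem : ((n-m:ℕ):ℕ∞) ≤ ladderT (dual (n:ℤ) ω) (Tinv (dual (n:ℤ) ω) (n-m)) :=
    Nat.sInf_mem ⟨n - m, hTset⟩
  rw [ha] at hTmem
  have hanm : n - m ≤ a := by exact_mod_cast hTmem
  have hna_n : ((n:ℤ) - (a:ℤ)) ∈ Aset ω n := ⟨_, a, ha, rfl⟩
  have hna_m : ((n:ℤ) - (a:ℤ)) ∈ Aset ω m := by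
    rw [mem_Aset_iff]
    have h2 := (mem_Aset_iff ω n _).mp hna_n
    exact ⟨by omega, fun p hp1 hp2 => h2.2 p hp1 (by omega)⟩
  have hle1 : (n:ℤ) - (a:ℤ) ≤ (m:ℤ) - (b:ℤ) := hub _ ⟨hna_m, hna_n⟩
  obtain ⟨k, j, hkj, hmb⟩ := hmem_n
  have hjge : ((n - m : ℕ):ℕ∞) ≤ ladderT (dual (n:ℤ) ω) k := by
    rw [hkj]
    exact_mod_cast (show (n - m:ℕ) ≤ j by omega)
  have hk0le : Tinv (dual (n:ℤ) ω) (n - m) ≤ k := Nat.sInf_le hjge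
  have hmono := ladder_mono (dual (n:ℤ) ω) hk0le
  rw [ha, hkj] at hmono
  have haj : a ≤ j := by exact_mod_cast hmono
  have hle2 : (m:ℤ) - (b:ℤ) ≤ (n:ℤ) - (a:ℤ) := by omega
  exact ⟨by rw [hmrca2]; omega, hmrca2⟩

end
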